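/- Let n : ℕ and i : ℕ with i + 2 < n. Let 𝔯_i be the endomorphism of FreeGroup (Fin n) determined on generators by x_i ↦ x_{i+1} * x_i * x_{i+1}⁻¹, x_{i+1} ↦ x_i, and x_k ↦ x_k for k ∉ {i, i+1}; let 𝔰_i be the endomorphism determined by x_i ↦ x_{i+1}, x_{i+1} ↦ x_i, x_k ↦ x_k otherwise; define 𝔯_{i+1} and 𝔰_{i+1} analogously with i replaced by i+1. Then 𝔯_i ∘ 𝔯_{i+1} ∘ 𝔰_i = 𝔰_{i+1} ∘ 𝔯_i ∘ 𝔯_{i+1} as monoid homomorphisms FreeGroup (Fin n) → FreeGroup (Fin n). -/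
import Mathlib


noncomputable section

/-- The endomorphism 𝔯_i of the free group on `n` generators:
`x_i ↦ x_{i+1} x_i x_{i+1}⁻¹`, `x_{i+1} ↦ x_i`, other generators fixed. -/
def rmap (n i : ℕ) (h : i + 1 < n) : FreeGroup (Fin n) →* FreeGroup (Fin n) :=
  FreeGroup.lift (fun j : Fin n =>
    if j.val = i then
      FreeGroup.of (⟨i + 1, h⟩ : Fin n) * FreeGroup.of (⟨i, Nat.lt_of_succ_lt h⟩ : Fin n) *
        (FreeGroup.of (⟨i + 1, h⟩ : Fin n))⁻¹
    else if j.val = i + 1 then FreeGroup.of (⟨i, Nat.lt_of_succ_lt h⟩ : Fin n)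
    else FreeGroup.of j)

/-- The endomorphism 𝔰_i of the free group on `n` generators:
`x_i ↦ x_{i+1}`, `x_{i+1} ↦ x_i`, other generators fixed. -/
def smap (n i : ℕ) (h : i + 1 < n) : FreeGroup (Fin n) →* FreeGroup (Fin n) :=
  FreeGroup.lift (fun j : Fin n =>
    if j.val = i then FreeGroup.of (⟨i + 1, h⟩ : Fin n)
    else if j.val = i + 1 then FreeGroup.of (⟨i, Nat.lt_of_succ_lt h⟩ : Fin n)
    else FreeGroup.of j)

theorem stmt14 (n i : ℕ) (h : i + 2 < n) :
    (rmap n i (by omega)).comp ((rmap n (i + 1) (by omega)).comp (smap n i (by omega))) =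
      (smap n (i + 1) (by omega)).comp
        ((rmap n i (by omega)).comp (rmap n (i + 1) (by omega))) := by
  have e1 : i + 1 + 1 ≠ i := by omega
  have e2 : i ≠ i + 1 + 1 := by omega
  have e3 : i ≠ i + 1 := by omega
  have e4 : i + 1 ≠ i := by omega
  have e5 : i + 1 + 1 ≠ i + 1 := by omega
  ext j
  rcases eq_or_ne j.val i with hi | hi
  · have hj : j = ⟨i, by omega⟩ := by ext; simpa using hi
    rw [hj]
    simp [rmap, smap, e1, e2, e3, e4, e5]
  rcases eq_or_ne j.val (i+1) with hi1 | hi1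
  · have hj : j = ⟨i+1, by omega⟩ := by ext; simpa using hi1
    rw [hj]
    simp [rmap, smap, e1, e2, e3, e4, e5]
  rcases eq_or_ne j.val (i+2) with hi2 | hi2
  · have hj : j = ⟨i+2, by omega⟩ := by ext; simpa using hi2
    rw [hj]
    simp [rmap, smap, e1, e2, e3, e4, e5]
  · simp [rmap, smap, hi, hi1, hi2, e1, e2, e3, e4, e5]
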